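/- Assume the Notation 3.2 setup. Let n ≥ 1 be a natural number with binary expansion n = 2^{i_1} + ⋯ + 2^{i_d} where i_1 < i_2 < ⋯ < i_d, let m be such that 2^m ≤ n < 2^{m+1}, and define L(n) = {a ∈ A(n) : a·A(2^{m+1}−n) ⊆ U(2^{m+1})} and R(n) = {a ∈ A(n) : A(2^{m+1}−n)·a ⊆ U(2^{m+1})}. Then there exist subspaces R'(n) ⊆ V(2^{i_1})V(2^{i_2})⋯V(2^{i_d}) and L'(n) ⊆ V(2^{i_d})V(2^{i_{d−1}})⋯V(2^{i_1}) such that R(n) ⊕ R'(n) = A(n) and L(n) ⊕ L'(n) = A(n). -/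

import Mathlib

open Module

noncomputable section

/-- The free associative algebra `K⟨x,y⟩` on two generators. -/
abbrev FA (K : Type*) [Field K] := FreeAlgebra K (Fin 2)

/-- The element of `K⟨x,y⟩` given by a word (a list of letters). -/
def wordOf (K : Type*) [Field K] (l : List (Fin 2)) : FA K :=
  (l.map (FreeAlgebra.ι K)).prod

/-- `a` is a word of length `n` over the two generators. -/
def IsWord (K : Type*) [Field K] (n : ℕ) (a : FA K) : Prop :=
  ∃ l : List (Fin 2), l.length = n ∧ a = wordOf K l

/-- `A(n)`: the span of all words of length `n`. -/
def Aspan (K : Type*) [Field K] (n : ℕ) : Submodule K (FA K) :=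
  Submodule.span K {a | IsWord K n a}

/-- The set `T = ∪_{i ≥ 1} {f(i)-g(i)-1, …, f(i)-1}`. -/
def Tset (f g : ℕ → ℕ) : Set ℕ :=
  {n | ∃ i, 1 ≤ i ∧ f i ≤ n + g i + 1 ∧ n + 1 ≤ f i}

/-- The data and conditions of Notation 3.2 (with the subspaces `U(2^n)`, `V(2^n)`
satisfying conditions (1)–(8) of Proposition 3.1). Here `U n` and `V n` denote the
subspaces `U(2^n)` and `V(2^n)` of `A(2^n)`. -/
structure LSYSetup (K : Type*) [Field K] where
  f : ℕ → ℕ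
  g : ℕ → ℕ
  W : ℕ → Submodule K (FA K)
  U : ℕ → Submodule K (FA K)
  V : ℕ → Submodule K (FA K)
  /-- `f(i-1) < f(i) - g(i) - 1` for all `i ≥ 1` -/
  hf : ∀ i, 1 ≤ i → f (i - 1) + g i + 1 < f i
  /-- `W_i ⊆ A(2^{f(i)})` -/
  hW_le : ∀ i, 1 ≤ i → W i ≤ Aspan K (2 ^ f i)
  /-- `dim W_i ≤ 2^{2^{g(i)}} - 2` -/
  hW_dim : ∀ i, 1 ≤ i → finrank K (W i) ≤ 2 ^ 2 ^ g i - 2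
  hU_le : ∀ n, U n ≤ Aspan K (2 ^ n)
  hV_le : ∀ n, V n ≤ Aspan K (2 ^ n)
  /-- (1) `U(2^n) ⊕ V(2^n) = A(2^n)` -/
  h_disj : ∀ n, Disjoint (U n) (V n)
  h_sup : ∀ n, U n ⊔ V n = Aspan K (2 ^ n)
  /-- (2) `dim V(2^n) = 2` whenever `n ∉ T` -/
  h_dimV : ∀ n, n ∉ Tset f g → finrank K (V n) = 2
  /-- (3) `dim V(2^{n+j}) = 2^{2^j}` whenever `n = f(i)-g(i)-1` and `0 ≤ j ≤ g(i)` -/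
  h_dimV' : ∀ i j n, 1 ≤ i → n + g i + 1 = f i → j ≤ g i →
      finrank K (V (n + j)) = 2 ^ 2 ^ j
  /-- (4) `V(2^n)` has a basis consisting of words -/
  h_basis : ∀ n, ∃ s : Set (FA K), (∀ w ∈ s, IsWord K (2 ^ n) w) ∧
      LinearIndependent K ((↑) : s → FA K) ∧ Submodule.span K s = V n
  /-- (5) `W_i ⊆ U(2^{f(i)})` -/
  hWU : ∀ i, 1 ≤ i → W i ≤ U (f i)
  /-- (6) `A(2^n)U(2^n) + U(2^n)A(2^n) ⊆ U(2^{n+1})` -/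
  hU_mul : ∀ n, Aspan K (2 ^ n) * U n ⊔ U n * Aspan K (2 ^ n) ≤ U (n + 1)
  /-- (7) `V(2^{n+1}) ⊆ V(2^n)V(2^n)` -/
  hV_mul : ∀ n, V (n + 1) ≤ V n * V n
  /-- (8) if `n ∉ T` then some word `w ∈ V(2^n)` has `w·A(2^n) ⊆ U(2^{n+1})` -/
  h_word : ∀ n, n ∉ Tset f g → ∃ w, IsWord K (2 ^ n) w ∧ w ∈ V n ∧
      ∀ a ∈ Aspan K (2 ^ n), w * a ∈ U (n + 1)

variable {K : Type*} [Field K]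

/-- `R(n) = {a ∈ A(n) : A(2^{m+1}-n)·a ⊆ U(2^{m+1})}`. -/
def Rspace (S : LSYSetup K) (n m : ℕ) : Submodule K (FA K) where
  carrier := {a | a ∈ Aspan K n ∧ ∀ b ∈ Aspan K (2 ^ (m + 1) - n), b * a ∈ S.U (m + 1)}
  add_mem' := by
    rintro a b ⟨ha1, ha2⟩ ⟨hb1, hb2⟩
    exact ⟨add_mem ha1 hb1, fun c hc => by
      rw [mul_add]; exact add_mem (ha2 c hc) (hb2 c hc)⟩
  zero_mem' := ⟨zero_mem _, fun c hc => by rw [mul_zero]; exact zero_mem _⟩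
  smul_mem' := by
    rintro k a ⟨ha1, ha2⟩
    exact ⟨Submodule.smul_mem _ k ha1, fun c hc => by
      rw [mul_smul_comm]; exact Submodule.smul_mem _ _ (ha2 c hc)⟩

/-- `L(n) = {a ∈ A(n) : a·A(2^{m+1}-n) ⊆ U(2^{m+1})}`. -/
def Lspace (S : LSYSetup K) (n m : ℕ) : Submodule K (FA K) where
  carrier := {a | a ∈ Aspan K n ∧ ∀ b ∈ Aspan K (2 ^ (m + 1) - n), a * b ∈ S.U (m + 1)}
  add_mem' := by
    rintro a b ⟨ha1, ha2⟩ ⟨hb1, hb2⟩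
    exact ⟨add_mem ha1 hb1, fun c hc => by
      rw [add_mul]; exact add_mem (ha2 c hc) (hb2 c hc)⟩
  zero_mem' := ⟨zero_mem _, fun c hc => by rw [zero_mul]; exact zero_mem _⟩
  smul_mem' := by
    rintro k a ⟨ha1, ha2⟩
    exact ⟨Submodule.smul_mem _ k ha1, fun c hc => by
      rw [smul_mul_assoc]; exact Submodule.smul_mem _ _ (ha2 c hc)⟩

/-- `I(n) = {a ∈ A(n) : A(j)·a·A(2^{m+2}-j-n) ⊆ U(2^{m+1})A(2^{m+1}) + A(2^{m+1})U(2^{m+1})`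
for all `0 ≤ j ≤ 2^{m+2}-n}`, where `2^m ≤ n < 2^{m+1}` (i.e. `m = Nat.log 2 n`). -/
def Ispace (S : LSYSetup K) (n : ℕ) : Submodule K (FA K) where
  carrier := {a | a ∈ Aspan K n ∧ ∀ j ≤ 2 ^ (Nat.log 2 n + 2) - n,
      ∀ b ∈ Aspan K j, ∀ c ∈ Aspan K (2 ^ (Nat.log 2 n + 2) - j - n),
      b * a * c ∈ S.U (Nat.log 2 n + 1) * Aspan K (2 ^ (Nat.log 2 n + 1)) ⊔
        Aspan K (2 ^ (Nat.log 2 n + 1)) * S.U (Nat.log 2 n + 1)}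
  add_mem' := by
    rintro a b ⟨ha1, ha2⟩ ⟨hb1, hb2⟩
    refine ⟨add_mem ha1 hb1, fun j hj c hc d hd => ?_⟩
    rw [mul_add, add_mul]
    exact add_mem (ha2 j hj c hc d hd) (hb2 j hj c hc d hd)
  zero_mem' := ⟨zero_mem _, fun j hj c hc d hd => by
    rw [mul_zero, zero_mul]; exact zero_mem _⟩
  smul_mem' := by
    rintro k a ⟨ha1, ha2⟩
    refine ⟨Submodule.smul_mem _ k ha1, fun j hj c hc d hd => ?_⟩
    rw [mul_smul_comm, smul_mul_assoc]
    exact Submodule.smul_mem _ _ (ha2 j hj c hc d hd)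

open scoped Pointwise

lemma wordOf_append (l₁ l₂ : List (Fin 2)) :
    wordOf K (l₁ ++ l₂) = wordOf K l₁ * wordOf K l₂ := by
  simp [wordOf]

lemma words_mul (a b : ℕ) :
    {z : FA K | IsWord K (a + b) z} = {z | IsWord K a z} * {z | IsWord K b z} := by
  ext z
  constructor
  · rintro ⟨l, hl, rfl⟩
    refine ⟨wordOf K (l.take a), ⟨l.take a, by simp [hl], rfl⟩,
      wordOf K (l.drop a), ⟨l.drop a, by simp [hl], rfl⟩, ?_⟩
    show wordOf K (l.take a) * wordOf K (l.drop a) = wordOf K l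
    rw [← wordOf_append, List.take_append_drop]
  · rintro ⟨x, ⟨lx, hlx, rfl⟩, y, ⟨ly, hly, rfl⟩, rfl⟩
    exact ⟨lx ++ ly, by simp [hlx, hly], (wordOf_append lx ly).symm⟩

lemma Aspan_mul (a b : ℕ) : Aspan K a * Aspan K b = Aspan K (a + b) := by
  rw [Aspan, Aspan, Submodule.span_mul_span, Aspan, words_mul]

lemma Aspan_zero : (Aspan K 0) = 1 := by
  rw [Aspan, Submodule.one_eq_span]
  congr 1
  ext z
  constructor
  · rintro ⟨l, hl, rfl⟩
    rw [List.length_eq_zero_iff] at hl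
    subst hl
    simp [wordOf]
  · rintro rfl
    exact ⟨[], rfl, by simp [wordOf]⟩

lemma abs_lemma (S : LSYSetup K) :
    ∀ (d k a b : ℕ), a + 2 ^ k + b = 2 ^ (k + d) → 2 ^ k ∣ a →
      Aspan K a * S.U k * Aspan K b ≤ S.U (k + d) := by
  intro d
  induction d with
  | zero =>
    intro k a b hsum hdvd
    simp only [Nat.add_zero] at hsum ⊢
    have hk : 0 < 2 ^ k := Nat.pow_pos (n := k) (by norm_num)
    have ha : a = 0 := by omega
    have hb : b = 0 := by omega
    subst ha; subst hb
    rw [Aspan_zero, one_mul, mul_one]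
  | succ d ih =>
    intro k a b hsum hdvd
    obtain ⟨t, ht⟩ := hdvd
    have hUk : Aspan K (2 ^ k) * S.U k ≤ S.U (k + 1) := le_trans le_sup_left (S.hU_mul k)
    have hUk' : S.U k * Aspan K (2 ^ k) ≤ S.U (k + 1) := le_trans le_sup_right (S.hU_mul k)
    have hkd : k + (d + 1) = (k + 1) + d := by omega
    have hM : (2 : ℕ) ^ (k + (d + 1)) = 2 ^ (k + 1) * 2 ^ d := by
      rw [hkd, pow_add]
    rcases Nat.even_or_odd t with he | ho
    · -- a divisible by 2^(k+1); steal 2^k from b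
      obtain ⟨s, hs⟩ := he
      have hdvd_a : 2 ^ (k + 1) ∣ a := ⟨s, by rw [ht, hs, pow_succ]; ring⟩
      have hdd : 2 ^ (k + 1) ∣ a + (2 ^ k + b) := by
        rw [← add_assoc, hsum, hM]; exact dvd_mul_right _ _
      obtain ⟨c, hc⟩ := (Nat.dvd_add_right hdvd_a).mp hdd
      have hcpos : 1 ≤ c := by
        rcases Nat.eq_zero_or_pos c with rfl | h
        · exfalso
          have : 0 < 2 ^ k := Nat.pow_pos (n := k) (by norm_num)
          omega
        · exact h
      have h4 : 2 ^ (k + 1) ≤ 2 ^ (k + 1) * c := Nat.le_mul_of_pos_right _ hcpos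
      have h2' : (2 : ℕ) ^ (k + 1) = 2 ^ k + 2 ^ k := by rw [pow_succ]; ring
      have hb : 2 ^ k ≤ b := by
        have h5 : 2 ^ k + 2 ^ k ≤ 2 ^ k + b := by rw [hc, ← h2']; exact h4
        exact le_of_add_le_add_left h5
      have hb' : b = 2 ^ k + (b - 2 ^ k) := by omega
      have hgoal : Aspan K a * S.U k * Aspan K b ≤ S.U ((k + 1) + d) := by
        have e1 : Aspan K b = Aspan K (2 ^ k) * Aspan K (b - 2 ^ k) := by
          rw [Aspan_mul]; rw [← hb']
        rw [e1, ← mul_assoc, mul_assoc (Aspan K a)]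
        refine le_trans (mul_le_mul' (mul_le_mul' le_rfl hUk') le_rfl) ?_
        refine ih (k + 1) a (b - 2 ^ k) ?_ hdvd_a
        rw [← hkd, h2']
        omega
      rw [hkd]; exact hgoal
    · -- a = a' + 2^k with 2^(k+1) | a'
      obtain ⟨u, hu⟩ := ho
      have ha : a = 2 ^ (k + 1) * u + 2 ^ k := by rw [ht, hu, pow_succ]; ring
      have hgoal : Aspan K a * S.U k * Aspan K b ≤ S.U ((k + 1) + d) := by
        have e1 : Aspan K a = Aspan K (2 ^ (k + 1) * u) * Aspan K (2 ^ k) := by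
          rw [Aspan_mul, ← ha]
        rw [e1, mul_assoc (Aspan K (2 ^ (k + 1) * u))]
        refine le_trans (mul_le_mul' (mul_le_mul' le_rfl hUk) le_rfl) ?_
        refine ih (k + 1) _ b ?_ ⟨u, rfl⟩
        have : (2:ℕ) ^ (k + 1) = 2 ^ k + 2 ^ k := by rw [pow_succ]; ring
        rw [← hkd]
        omega
      rw [hkd]; exact hgoal

lemma sum_lt : ∀ (L : List ℕ) (M : ℕ), L.Pairwise (· < ·) → (∀ i ∈ L, i < M) →
    (L.map (2 ^ ·)).sum < 2 ^ M := by
  intro L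
  induction L using List.reverseRecOn with
  | nil => intro M _ _; simpa using Nat.pos_pow_of_pos M (by norm_num)
  | append_singleton L' a ih =>
    intro M hs hlt
    obtain ⟨h1, _, h3⟩ := List.pairwise_append.mp hs
    have ha : (L'.map (2 ^ ·)).sum < 2 ^ a :=
      ih a h1 (fun i hi => h3 i hi a (by simp))
    have haM : a < M := hlt a (by simp)
    have h4 : 2 ^ (a + 1) ≤ 2 ^ M := Nat.pow_le_pow_right (by norm_num) haM
    have h5 : (2 : ℕ) ^ (a + 1) = 2 ^ a + 2 ^ a := by rw [pow_succ]; ring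
    rw [List.map_append, List.sum_append]
    simp only [List.map_cons, List.map_nil, List.sum_cons, List.sum_nil]
    omega

lemma mem_le_sum {m : ℕ} {L : List ℕ} (h : m ∈ L) : 2 ^ m ≤ (L.map (2 ^ ·)).sum :=
  List.single_le_sum (fun x _ => Nat.zero_le x) _ (List.mem_map_of_mem h)

lemma prodV_le (S : LSYSetup K) : ∀ L : List ℕ,
    (L.map S.V).prod ≤ Aspan K ((L.map (2 ^ ·)).sum) := by
  intro L
  induction L with
  | nil => simp [Aspan_zero]
  | cons i L' ih =>
    simp only [List.map_cons, List.prod_cons, List.sum_cons]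
    rw [← Aspan_mul]
    exact mul_le_mul' (S.hV_le i) ih

lemma compl_in {M : Type*} [AddCommGroup M] [Module K M] (R P Q : Submodule K M)
    (hR : R ≤ Q) (hP : P ≤ Q) (h : Q ≤ R ⊔ P) :
    ∃ R' : Submodule K M, R' ≤ P ∧ Disjoint R R' ∧ R ⊔ R' = Q := by
  obtain ⟨q, hq⟩ := Submodule.exists_isCompl ((R ⊓ P).comap P.subtype)
  have hinj := Submodule.injective_subtype P
  have hmapc : ((R ⊓ P).comap P.subtype).map P.subtype = R ⊓ P := by
    rw [Submodule.map_comap_subtype]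
    exact inf_eq_right.mpr inf_le_right
  refine ⟨q.map P.subtype, Submodule.map_subtype_le P q, ?_, ?_⟩
  · rw [disjoint_iff]
    have h1 : R ⊓ q.map P.subtype ≤ (R ⊓ P) ⊓ q.map P.subtype := by
      refine le_inf (le_inf inf_le_left ?_) inf_le_right
      exact le_trans inf_le_right (Submodule.map_subtype_le P q)
    have h2 : (R ⊓ P) ⊓ q.map P.subtype = ⊥ := by
      have hb : ((R ⊓ P).comap P.subtype ⊓ q).map P.subtype = ⊥ := by
        rw [hq.inf_eq_bot, Submodule.map_bot]
      rw [← hmapc, ← Submodule.map_inf _ hinj, hb]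
    exact le_bot_iff.mp (h2 ▸ h1)
  · refine le_antisymm (sup_le hR (le_trans (Submodule.map_subtype_le P q) hP)) ?_
    have hPle : P ≤ R ⊔ q.map P.subtype := by
      have : ((R ⊓ P).comap P.subtype ⊔ q).map P.subtype = P := by
        rw [hq.sup_eq_top, Submodule.map_subtype_top]
      calc P = ((R ⊓ P).comap P.subtype ⊔ q).map P.subtype := this.symm
        _ = (R ⊓ P) ⊔ q.map P.subtype := by rw [Submodule.map_sup, hmapc]
        _ ≤ R ⊔ q.map P.subtype := sup_le (le_trans inf_le_left le_sup_left) le_sup_right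
    exact le_trans h (sup_le le_sup_left (le_trans hPle (sup_le le_sup_left le_sup_right)))

lemma main_lemma (S : LSYSetup K) (m : ℕ) :
    ∀ L : List ℕ, L ≠ [] → L.Pairwise (· < ·) → (∀ i ∈ L, i ≤ m) → m ∈ L →
      Aspan K ((L.map (2 ^ ·)).sum) ≤
          Rspace S ((L.map (2 ^ ·)).sum) m ⊔ (L.map S.V).prod ∧
      Aspan K ((L.map (2 ^ ·)).sum) ≤
          Lspace S ((L.map (2 ^ ·)).sum) m ⊔ (L.reverse.map S.V).prod := by
  intro L
  induction L with
  | nil => intro h; exact absurd rfl h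
  | cons i L' ih =>
    intro _ hsort hle hmem
    obtain ⟨hgt, hsort'⟩ := List.pairwise_cons.mp hsort
    simp only [List.map_cons, List.sum_cons, List.prod_cons, List.reverse_cons,
      List.map_append, List.prod_append, List.map_nil, List.prod_nil, mul_one]
    set n' : ℕ := (L'.map (2 ^ ·)).sum with hn'
    have hUi : Aspan K (2 ^ i) * S.U i ≤ S.U (i + 1) := le_trans le_sup_left (S.hU_mul i)
    have hUi' : S.U i * Aspan K (2 ^ i) ≤ S.U (i + 1) := le_trans le_sup_right (S.hU_mul i)
    have him : i ≤ m := hle i (by simp)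
    have hnlt : 2 ^ i + n' < 2 ^ (m + 1) := by
      have := sum_lt (i :: L') (m + 1) hsort (fun j hj => Nat.lt_succ_of_le (hle j hj))
      simpa using this
    rcases eq_or_ne L' [] with rfl | hne'
    · -- base case : L = [i] and i = m
      have him' : i = m := by
        rcases List.mem_cons.mp hmem with h | h
        · exact h.symm
        · simp at h
      subst him'
      simp only [List.map_nil, List.sum_nil, List.prod_nil, List.reverse_nil,
        List.map_nil, List.prod_nil, add_zero, one_mul, mul_one]
      have hsub : 2 ^ (i + 1) - 2 ^ i = 2 ^ i := by
        have : (2 : ℕ) ^ (i + 1) = 2 ^ i + 2 ^ i := by rw [pow_succ]; ring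
        omega
      have h0 : (2 : ℕ) ^ i + n' = 2 ^ i := by simp [hn']
      rw [h0]
      constructor
      · rw [← S.h_sup i]
        refine sup_le ?_ le_sup_right
        refine le_trans ?_ le_sup_left
        intro u hu
        refine ⟨S.hU_le i hu, fun b hb => ?_⟩
        rw [hsub] at hb
        exact hUi (Submodule.mul_mem_mul hb hu)
      · rw [← S.h_sup i]
        refine sup_le ?_ le_sup_right
        refine le_trans ?_ le_sup_left
        intro u hu
        refine ⟨S.hU_le i hu, fun b hb => ?_⟩
        rw [hsub] at hb
        exact hUi' (Submodule.mul_mem_mul hu hb)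
    · -- inductive step
      have hm' : m ∈ L' := by
        rcases List.mem_cons.mp hmem with h | h
        · subst h
          obtain ⟨j, hj⟩ := List.exists_mem_of_ne_nil L' hne'
          exact absurd (hgt j hj) (not_lt.mpr (hle j (List.mem_cons_of_mem _ hj)))
        · exact h
      obtain ⟨IHR, IHL⟩ := ih hne' hsort' (fun j hj => hle j (List.mem_cons_of_mem _ hj)) hm'
      have hdvd' : 2 ^ (i + 1) ∣ n' := by
        refine List.dvd_sum fun x hx => ?_
        obtain ⟨j, hj, rfl⟩ := List.mem_map.mp hx
        exact pow_dvd_pow 2 (hgt j hj)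
      have hdvdn : 2 ^ i ∣ 2 ^ i + n' :=
        dvd_add dvd_rfl (dvd_trans (pow_dvd_pow 2 (Nat.le_succ i)) hdvd')
      have hdvda : 2 ^ i ∣ 2 ^ (m + 1) - (2 ^ i + n') :=
        Nat.dvd_sub (pow_dvd_pow 2 (by omega)) hdvdn
      have hdvdn' : 2 ^ i ∣ n' := dvd_trans (pow_dvd_pow 2 (Nat.le_succ i)) hdvd'
      have hik : i + (m + 1 - i) = m + 1 := by omega
      constructor
      · -- R part
        have hdec : Aspan K (2 ^ i + n') = (S.U i ⊔ S.V i) * Aspan K n' := by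
          rw [S.h_sup i, Aspan_mul]
        rw [hdec, Submodule.sup_mul]
        refine sup_le ?_ ?_
        · -- U i * A(n') ≤ R
          refine le_trans ?_ le_sup_left
          rw [Submodule.mul_le]
          intro u hu x hx
          refine ⟨?_, fun b hb => ?_⟩
          · rw [← Aspan_mul]
            exact Submodule.mul_mem_mul (S.hU_le i hu) hx
          · have habs := abs_lemma S (m + 1 - i) i (2 ^ (m + 1) - (2 ^ i + n')) n'
              (by rw [hik]; omega) hdvda
            rw [hik] at habs
            rw [← mul_assoc]
            exact habs (Submodule.mul_mem_mul (Submodule.mul_mem_mul hb hu) hx)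
        · -- V i * A(n')
          refine le_trans (mul_le_mul' le_rfl IHR) ?_
          rw [Submodule.mul_sup]
          refine sup_le (le_trans ?_ le_sup_left) le_sup_right
          rw [Submodule.mul_le]
          intro v hv r hr
          obtain ⟨hr1, hr2⟩ := hr
          refine ⟨?_, fun b hb => ?_⟩
          · rw [← Aspan_mul]
            exact Submodule.mul_mem_mul (S.hV_le i hv) hr1
          · rw [← mul_assoc]
            have hbv : b * v ∈ Aspan K (2 ^ (m + 1) - n') := by
              have he : (2 ^ (m + 1) - (2 ^ i + n')) + 2 ^ i = 2 ^ (m + 1) - n' := by omega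
              rw [← he, ← Aspan_mul]
              exact Submodule.mul_mem_mul hb (S.hV_le i hv)
            exact hr2 (b * v) hbv
      · -- L part
        have hdec : Aspan K (2 ^ i + n') = Aspan K n' * (S.U i ⊔ S.V i) := by
          rw [S.h_sup i, Aspan_mul, Nat.add_comm]
        rw [hdec, Submodule.mul_sup]
        refine sup_le ?_ ?_
        · -- A(n') * U i ≤ L
          refine le_trans ?_ le_sup_left
          rw [Submodule.mul_le]
          intro x hx u hu
          refine ⟨?_, fun b hb => ?_⟩
          · rw [show (2:ℕ) ^ i + n' = n' + 2 ^ i by omega, ← Aspan_mul]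
            exact Submodule.mul_mem_mul hx (S.hU_le i hu)
          · have habs := abs_lemma S (m + 1 - i) i n' (2 ^ (m + 1) - (2 ^ i + n'))
              (by rw [hik]; omega) hdvdn'
            rw [hik] at habs
            exact habs (Submodule.mul_mem_mul (Submodule.mul_mem_mul hx hu) hb)
        · -- A(n') * V i
          refine le_trans (mul_le_mul' IHL le_rfl) ?_
          rw [Submodule.sup_mul]
          refine sup_le (le_trans ?_ le_sup_left) le_sup_right
          rw [Submodule.mul_le]
          intro r hr v hv
          obtain ⟨hr1, hr2⟩ := hr
          refine ⟨?_, fun b hb => ?_⟩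
          · rw [show (2:ℕ) ^ i + n' = n' + 2 ^ i by omega, ← Aspan_mul]
            exact Submodule.mul_mem_mul hr1 (S.hV_le i hv)
          · rw [mul_assoc]
            have hbv : v * b ∈ Aspan K (2 ^ (m + 1) - n') := by
              have he : 2 ^ i + (2 ^ (m + 1) - (2 ^ i + n')) = 2 ^ (m + 1) - n' := by omega
              rw [← he, ← Aspan_mul]
              exact Submodule.mul_mem_mul (S.hV_le i hv) hb
            exact hr2 (v * b) hbv


/-- **Corollary 3.4.** If `n ≥ 1` has binary expansion `2^{i₁} + ⋯ + 2^{i_d}` with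
`i₁ < ⋯ < i_d` and `2^m ≤ n < 2^{m+1}`, then there exist subspaces
`R'(n) ⊆ V(2^{i₁})⋯V(2^{i_d})` and `L'(n) ⊆ V(2^{i_d})⋯V(2^{i₁})` with
`R(n) ⊕ R'(n) = L(n) ⊕ L'(n) = A(n)`. -/
theorem corollary_3_4 (S : LSYSetup K) (n : ℕ) (hn : 1 ≤ n)
    (L : List ℕ) (hL : L.Pairwise (· < ·)) (hsum : (L.map (2 ^ ·)).sum = n)
    (m : ℕ) (hm₁ : 2 ^ m ≤ n) (hm₂ : n < 2 ^ (m + 1)) :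
    ∃ R' L' : Submodule K (FA K),
      R' ≤ (L.map S.V).prod ∧ L' ≤ (L.reverse.map S.V).prod ∧
      Disjoint (Rspace S n m) R' ∧ Rspace S n m ⊔ R' = Aspan K n ∧
      Disjoint (Lspace S n m) L' ∧ Lspace S n m ⊔ L' = Aspan K n := by
  subst hsum
  have hLne : L ≠ [] := by rintro rfl; simp at hn
  obtain ⟨L'', a, rfl⟩ : ∃ L'' a, L = L'' ++ [a] := by
    rcases L.eq_nil_or_concat with h | ⟨L'', b, h⟩
    · exact absurd h hLne
    · exact ⟨L'', b, by rw [h]; simp⟩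
  obtain ⟨h1, _, h3⟩ := List.pairwise_append.mp hL
  have hge : 2 ^ a ≤ ((L'' ++ [a]).map (2 ^ ·)).sum := mem_le_sum (by simp)
  have hlt : ((L'' ++ [a]).map (2 ^ ·)).sum < 2 ^ (a + 1) := by
    refine sum_lt _ (a + 1) hL fun j hj => ?_
    rcases List.mem_append.mp hj with h | h
    · exact Nat.lt_succ_of_lt (h3 j h a (by simp))
    · simp at h; omega
  have ham : a = m := by
    have h4 : m < a + 1 := by
      have := lt_of_le_of_lt hm₁ hlt
      exact (Nat.pow_lt_pow_iff_right (by norm_num : 1 < 2)).mp this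
    have h5 : a < m + 1 := by
      have := lt_of_le_of_lt hge hm₂
      exact (Nat.pow_lt_pow_iff_right (by norm_num : 1 < 2)).mp this
    omega
  subst ham
  have hmemL : a ∈ L'' ++ [a] := by simp
  have hleL : ∀ i ∈ L'' ++ [a], i ≤ a := by
    intro i hi
    rcases List.mem_append.mp hi with h | h
    · exact le_of_lt (h3 i h a (by simp))
    · simp at h; omega
  obtain ⟨hmainR, hmainL⟩ := main_lemma S a (L'' ++ [a]) hLne hL hleL hmemL
  set L : List ℕ := L'' ++ [a] with hLdef
  set nn : ℕ := (L.map (2 ^ ·)).sum with hnn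
  have hRle : Rspace S nn a ≤ Aspan K nn := fun x hx => hx.1
  have hLle : Lspace S nn a ≤ Aspan K nn := fun x hx => hx.1
  have hprodR : (L.map S.V).prod ≤ Aspan K nn := prodV_le S L
  have hprodL : (L.reverse.map S.V).prod ≤ Aspan K nn := by
    have h := prodV_le S L.reverse
    have e : ((L.reverse.map (2 ^ ·)).sum) = nn := by
      rw [List.map_reverse, List.sum_reverse]
    rwa [e] at h
  obtain ⟨R', hR'1, hR'2, hR'3⟩ :=
    compl_in (Rspace S nn a) ((L.map S.V).prod) (Aspan K nn) hRle hprodR hmainR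
  obtain ⟨Lp, hLp1, hLp2, hLp3⟩ :=
    compl_in (Lspace S nn a) ((L.reverse.map S.V).prod) (Aspan K nn) hLle hprodL hmainL
  exact ⟨R', Lp, hR'1, hLp1, hR'2, hR'3, hLp2, hLp3⟩

end
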